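/- Let p be an odd prime and let S ⊆ {0,…,p−1} be nonempty with |S| < p. Then the p-clock sum f(m) = (Σ_{t∈S} ((m+t) mod p)) mod 2, as a function ℕ → ℤ/2ℤ, has minimal period exactly p (in particular, f is not constant). -/

import Mathlib

lemma clock_mod_cases {p x : ℕ} (hp : 0 < p) (hx : x < 2 * p) :
    x % p = if x < p then x else x - p := by
  split_ifs with h
  · exact Nat.mod_eq_of_lt h
  · rw [Nat.mod_eq_sub_mod (le_of_not_gt h), Nat.mod_eq_of_lt]; omega

theorem stmt_12 (p : ℕ) (hp : p.Prime) (hodd : Odd p)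
    (S : Finset ℕ) (hS : S ⊆ Finset.range p) (hne : S.Nonempty)
    (hcard : S.card < p) :
    (∀ m : ℕ, ((∑ t ∈ S, ((m + p) + t) % p) % 2) = ((∑ t ∈ S, (m + t) % p) % 2)) ∧
    (∀ b, 0 < b →
      (∀ m : ℕ, ((∑ t ∈ S, ((m + b) + t) % p) % 2) = ((∑ t ∈ S, (m + t) % p) % 2)) →
      p ≤ b) := by
  have hp2 : 1 < p := hp.one_lt
  have hperp : ∀ m : ℕ, ((∑ t ∈ S, ((m + p) + t) % p) % 2) = ((∑ t ∈ S, (m + t) % p) % 2) := by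
    intro m
    congr 1
    apply Finset.sum_congr rfl
    intro t _
    have h : m + p + t = m + t + p := by ring
    rw [h, Nat.add_mod_right]
  refine ⟨hperp, ?_⟩
  intro b hb hper
  by_contra hbp
  push_neg at hbp
  -- iterate periods
  have hperkb : ∀ k m : ℕ,
      ((∑ t ∈ S, ((m + k * b) + t) % p) % 2) = ((∑ t ∈ S, (m + t) % p) % 2) := by
    intro k
    induction k with
    | zero => simp
    | succ k ih =>
      intro m
      have h1 : m + (k + 1) * b = (m + k * b) + b := by ring
      rw [h1, hper (m + k * b), ih m]
  have hperkp : ∀ k m : ℕ,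
      ((∑ t ∈ S, ((m + k * p) + t) % p) % 2) = ((∑ t ∈ S, (m + t) % p) % 2) := by
    intro k
    induction k with
    | zero => simp
    | succ k ih =>
      intro m
      have h1 : m + (k + 1) * p = (m + k * p) + p := by ring
      rw [h1, hperp (m + k * p), ih m]
  -- coprimality & Bezout: get period 1
  have hcop : Nat.Coprime b p := by
    have : ¬ p ∣ b := fun h => absurd (Nat.le_of_dvd hb h) (not_le.mpr hbp)
    exact (Nat.coprime_comm.mp (hp.coprime_iff_not_dvd.mpr this))
  obtain ⟨x, -, hx⟩ := Nat.exists_mul_mod_eq_one_of_coprime hcop hp2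
  have hdm : p * (b * x / p) + 1 = b * x := by
    conv_rhs => rw [← Nat.div_add_mod (b * x) p, hx]
  have h1 : ∀ m : ℕ,
      ((∑ t ∈ S, ((m + 1) + t) % p) % 2) = ((∑ t ∈ S, (m + t) % p) % 2) := by
    intro m
    have e1 := hperkp (b * x / p) (m + 1)
    have e2 := hperkb x m
    have e3 : m + 1 + (b * x / p) * p = m + x * b := by
      rw [mul_comm (b * x / p) p]
      have hc : x * b = b * x := mul_comm x b
      omega
    rw [e3] at e1
    rw [← e1, e2]
  -- pick s ∈ S and s' ∉ S with s' < p
  obtain ⟨s, hsS⟩ := hne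
  have hs : s < p := Finset.mem_range.mp (hS hsS)
  have hssub : S ⊂ Finset.range p := by
    refine hS.ssubset_of_ne ?_
    intro h
    rw [h, Finset.card_range] at hcard
    omega
  obtain ⟨s', hs'r, hs'S⟩ := Finset.exists_of_ssubset hssub
  have hs' : s' < p := Finset.mem_range.mp hs'r
  -- step lemma
  have hstep : ∀ m t : ℕ, t ∈ S → (m + t) % p ≠ p - 1 →
      (m + 1 + t) % p = (m + t) % p + 1 := by
    intro m t ht hne1
    have h : m + 1 + t = (m + t) + 1 := by ring
    rw [h, Nat.add_mod (m + t) 1 p, Nat.mod_eq_of_lt (show 1 < p from hp2)]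
    have := Nat.mod_lt (m + t) (show 0 < p by omega)
    exact Nat.mod_eq_of_lt (by omega)
  -- case m1 = p - 1 - s' : card S is even
  have hcase1 : S.card % 2 = 0 := by
    set m := p - 1 - s' with hm
    have hnw : ∀ t ∈ S, (m + t) % p ≠ p - 1 := by
      intro t ht
      have htp : t < p := Finset.mem_range.mp (hS ht)
      have hts : t ≠ s' := fun h => hs'S (h ▸ ht)
      have := clock_mod_cases (show 0 < p by omega) (show m + t < 2 * p by omega)
      rw [this]
      split_ifs with h <;> omega
    have hsum : (∑ t ∈ S, (m + 1 + t) % p) = (∑ t ∈ S, (m + t) % p) + S.card := by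
      rw [Finset.sum_congr rfl (fun t ht => hstep m t ht (hnw t ht)),
        Finset.sum_add_distrib, Finset.sum_const, smul_eq_mul, mul_one]
    have := h1 m
    rw [hsum] at this
    omega
  -- case m2 = p - 1 - s : card S is odd, contradiction
  set m := p - 1 - s with hm
  have hwrap : (m + s) % p = p - 1 := by
    have : m + s = p - 1 := by omega
    rw [this, Nat.mod_eq_of_lt (by omega)]
  have hnw : ∀ t ∈ S.erase s, (m + t) % p ≠ p - 1 := by
    intro t ht
    have htS := Finset.mem_of_mem_erase ht
    have hts : t ≠ s := Finset.ne_of_mem_erase ht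
    have htp : t < p := Finset.mem_range.mp (hS htS)
    have := clock_mod_cases (show 0 < p by omega) (show m + t < 2 * p by omega)
    rw [this]
    split_ifs with h <;> omega
  have hsplit1 : (∑ t ∈ S, (m + t) % p)
      = (m + s) % p + ∑ t ∈ S.erase s, (m + t) % p :=
    (Finset.add_sum_erase S _ hsS).symm
  have hsplit2 : (∑ t ∈ S, (m + 1 + t) % p)
      = (m + 1 + s) % p + ∑ t ∈ S.erase s, (m + 1 + t) % p :=
    (Finset.add_sum_erase S _ hsS).symm
  have hws : (m + 1 + s) % p = 0 := by
    have : m + 1 + s = p := by omega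
    rw [this, Nat.mod_self]
  have hsum2 : (∑ t ∈ S.erase s, (m + 1 + t) % p)
      = (∑ t ∈ S.erase s, (m + t) % p) + (S.erase s).card := by
    rw [Finset.sum_congr rfl
        (fun t ht => hstep m t (Finset.mem_of_mem_erase ht) (hnw t ht)),
      Finset.sum_add_distrib, Finset.sum_const, smul_eq_mul, mul_one]
  have hcerase : (S.erase s).card = S.card - 1 := Finset.card_erase_of_mem hsS
  have hS1 : 1 ≤ S.card := Finset.card_pos.mpr ⟨s, hsS⟩
  have hp2' : p % 2 = 1 := Nat.odd_iff.mp hodd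
  have := h1 m
  rw [hsplit1, hsplit2, hws, hwrap, hsum2, hcerase] at this
  omega
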